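/- In the joint problem of maximizing ∑_{i=1}^N r_i over rates r, receiver rates r̄, and transfers δ subject to (b) ∑_{i=1}^j g⁻¹(r_i) ≤ ∑_{i=1}^j E_i, (c) ∑_{i=1}^j φ(r̄_i) ≤ ∑_{i=1}^j (Ē_i + α δ_i), (d) ∑_{i=1}^j δ_i ≤ ∑_{i=1}^j H_i, (e) φ(r̄_j) ≥ Ē_j, and (f) r_j ≤ r̄_j for all j: replacing constraints (c) and (d) by (c') ∑_{i=1}^j φ(r̄_i) ≤ ∑_{i=1}^j (Ē_i + α H_i) yields the same optimal value of ∑ r_i. -/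

import Mathlib

open Finset

/-- Application of Lemma 1 to problem (11): in the joint transmitter /
receiver / helper problem, replacing the transfer constraints (c),(d) by the
immediate-transfer constraint (c') does not change the optimal value. -/
theorem stmt_10 (N : ℕ) (hN : 0 < N)
    (E Ebar H : Fin N → ℝ)
    (hE : ∀ i, 0 ≤ E i) (hEbar : ∀ i, 0 ≤ Ebar i) (hH : ∀ i, 0 ≤ H i)
    (α : ℝ) (hα0 : 0 ≤ α) (hα1 : α ≤ 1)
    (ginv φ : ℝ → ℝ)
    (hgconv : ConvexOn ℝ (Set.Ici 0) ginv)
    (hgmono : MonotoneOn ginv (Set.Ici 0))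
    (hφconv : ConvexOn ℝ (Set.Ici 0) φ)
    (hφmono : MonotoneOn φ (Set.Ici 0))
    (hφ0 : φ 0 = 0) :
    sSup {v : ℝ | ∃ r rbar δ : Fin N → ℝ,
        (∀ i, 0 ≤ r i) ∧ (∀ i, 0 ≤ rbar i) ∧ (∀ i, 0 ≤ δ i) ∧
        (∀ j : Fin N, ∑ i ∈ Iic j, ginv (r i) ≤ ∑ i ∈ Iic j, E i) ∧
        (∀ j : Fin N, ∑ i ∈ Iic j, φ (rbar i) ≤
          ∑ i ∈ Iic j, (Ebar i + α * δ i)) ∧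
        (∀ j : Fin N, ∑ i ∈ Iic j, δ i ≤ ∑ i ∈ Iic j, H i) ∧
        (∀ j, Ebar j ≤ φ (rbar j)) ∧
        (∀ j, r j ≤ rbar j) ∧
        v = ∑ i, r i} =
    sSup {v : ℝ | ∃ r rbar : Fin N → ℝ,
        (∀ i, 0 ≤ r i) ∧ (∀ i, 0 ≤ rbar i) ∧
        (∀ j : Fin N, ∑ i ∈ Iic j, ginv (r i) ≤ ∑ i ∈ Iic j, E i) ∧
        (∀ j : Fin N, ∑ i ∈ Iic j, φ (rbar i) ≤
          ∑ i ∈ Iic j, (Ebar i + α * H i)) ∧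
        (∀ j, Ebar j ≤ φ (rbar j)) ∧
        (∀ j, r j ≤ rbar j) ∧
        v = ∑ i, r i} := by
  congr 1
  ext v
  constructor
  · rintro ⟨r, rbar, δ, hr, hrb, hδ, hb, hc, hd, he, hf, hv⟩
    refine ⟨r, rbar, hr, hrb, hb, ?_, he, hf, hv⟩
    intro j
    calc ∑ i ∈ Iic j, φ (rbar i) ≤ ∑ i ∈ Iic j, (Ebar i + α * δ i) := hc j
      _ ≤ ∑ i ∈ Iic j, (Ebar i + α * H i) := by
          rw [Finset.sum_add_distrib, Finset.sum_add_distrib,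
            ← Finset.mul_sum, ← Finset.mul_sum]
          exact add_le_add le_rfl (mul_le_mul_of_nonneg_left (hd j) hα0)
  · rintro ⟨r, rbar, hr, hrb, hb, hc, he, hf, hv⟩
    exact ⟨r, rbar, H, hr, hrb, hH, hb, hc, fun j => le_rfl, he, hf, hv⟩
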